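/- Finite time stability of the semilinear fractional multi-delay system: Consider D^q x(t) = A₀x(t) + Σ_{i=1}^p A_i x(t−τ_i) + B₀u(t) + f(t,x(t)) for t ≥ 0, with x(t) = ψ(t) on [−τ,0], τ = max τ_i, where each solution satisfies the integral equation x(t) = x(0) + (1/Γ(q))∫₀ᵗ(t−s)^{q−1}[A₀x(s) + Σ_i A_i x(s−τ_i) + B₀u(s) + f(s,x(s))]ds. Let σ bound the operator norms of A₀,…,A_p, let b₀ bound the operator norm of B₀, let f satisfy ‖f(t,x)‖ ≤ L‖x‖ + m, and suppose ‖ψ‖_∞ < δ and ‖u(t)‖ ≤ q_u on [0,T]. If [1 + (m + b₀q_u)T^q/(δ·Γ(q+1))]·E_q((L + σ(p+1))T^q) < ε/δ, then ‖x(t)‖ < ε for all t ∈ [0,T]. -/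

import Mathlib

open Set Real MeasureTheory

noncomputable def mittagLeffler (q z : ℝ) : ℝ :=
  ∑' k : ℕ, z ^ k / Real.Gamma (k * q + 1)

lemma myGamma_one_le {x : ℝ} (hx : 2 ≤ x) : 1 ≤ Real.Gamma x := by
  rcases eq_or_lt_of_le hx with h | h
  · rw [← h, Real.Gamma_two]
  · have := Real.Gamma_strictMonoOn_Ici self_mem_Ici (mem_Ici.2 hx) h
    rw [Real.Gamma_two] at this
    exact this.le

lemma myGamma_mono {x y : ℝ} (hx : 2 ≤ x) (hxy : x ≤ y) :
    Real.Gamma x ≤ Real.Gamma y :=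
  Real.Gamma_strictMonoOn_Ici.monotoneOn (mem_Ici.2 hx) (mem_Ici.2 (hx.trans hxy)) hxy

lemma myGamma_fact {y : ℝ} (hy : 1 ≤ y) :
    (Nat.factorial (⌊y⌋₊ - 1) : ℝ) ≤ 2 * Real.Gamma y := by
  have hy0 : 0 < y := lt_of_lt_of_le one_pos hy
  have hΓpos : 0 < Real.Gamma y := Real.Gamma_pos_of_pos hy0
  by_cases h2 : 2 ≤ y
  · have hfl : 2 ≤ ⌊y⌋₊ := Nat.le_floor (by exact_mod_cast h2)
    have h1 : ((⌊y⌋₊ : ℕ) : ℝ) ≤ y := Nat.floor_le hy0.le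
    have h2' : (2:ℝ) ≤ ((⌊y⌋₊ : ℕ) : ℝ) := by exact_mod_cast hfl
    have hmono : Real.Gamma ((⌊y⌋₊ : ℕ) : ℝ) ≤ Real.Gamma y := myGamma_mono h2' h1
    have heq : Real.Gamma ((⌊y⌋₊ : ℕ) : ℝ) = (Nat.factorial (⌊y⌋₊ - 1) : ℝ) := by
      have hpos : 0 < ⌊y⌋₊ := lt_of_lt_of_le one_pos (by omega)
      have h4 : ⌊y⌋₊ - 1 + 1 = ⌊y⌋₊ := Nat.succ_pred_eq_of_pos hpos
      have h3 : ((⌊y⌋₊ : ℕ) : ℝ) = ((⌊y⌋₊ - 1 : ℕ) : ℝ) + 1 := by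
        exact_mod_cast (congrArg (Nat.cast (R := ℝ)) h4).symm
      rw [h3, Real.Gamma_nat_eq_factorial]
    rw [heq] at hmono
    linarith
  · push_neg at h2
    have hfl : ⌊y⌋₊ = 1 := by
      rw [Nat.floor_eq_iff hy0.le]
      constructor
      · exact_mod_cast hy
      · exact_mod_cast h2
    have hG1 : 1 ≤ Real.Gamma (y + 1) := myGamma_one_le (by linarith)
    rw [Real.Gamma_add_one hy0.ne'] at hG1
    have : 1 ≤ 2 * Real.Gamma y := by nlinarith
    simpa [hfl, Nat.factorial] using this

lemma summable_aux {q z : ℝ} (hq : 0 < q) (hz : 0 ≤ z) {G : ℕ → ℝ}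
    (hGpos : ∀ k, 0 < G k)
    (hG : ∀ k : ℕ, (Nat.factorial ⌊(k : ℝ) * q⌋₊ : ℝ) ≤ 2 * G k) :
    Summable (fun k : ℕ => z ^ k / G k) := by
  set M : ℕ := ⌈1/q⌉₊ with hM
  have hMq : 1/q ≤ (M : ℝ) := Nat.le_ceil _
  set Z : ℝ := max 1 z with hZ
  have hZ1 : 1 ≤ Z := le_max_left _ _
  set W : ℝ := Z ^ M with hW
  have hW0 : 0 < W := by positivity
  have hBnn : ∀ j : ℕ, 0 ≤ 2 * W ^ (j+1) / (Nat.factorial j) := by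
    intro j; positivity
  have hBsum : Summable (fun j : ℕ => 2 * W ^ (j+1) / (Nat.factorial j)) := by
    have h1 : Summable (fun j : ℕ => W ^ j / (Nat.factorial j)) :=
      Real.summable_pow_div_factorial W
    exact ((h1.mul_left (2 * W)).congr (fun j => by ring))
  set B : ℝ := ∑' j : ℕ, 2 * W ^ (j+1) / (Nat.factorial j) with hB
  -- pointwise bound
  have key : ∀ k : ℕ, z ^ k / G k ≤ 2 * W ^ (⌊(k:ℝ)*q⌋₊+1) / (Nat.factorial ⌊(k:ℝ)*q⌋₊) := by
    intro k
    set j := ⌊(k:ℝ)*q⌋₊ with hj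
    have hzk : z ^ k ≤ W ^ (j+1) := by
      have h1 : z ^ k ≤ Z ^ k := pow_le_pow_left₀ hz (le_max_right _ _) _
      have h2 : (k:ℝ) < (((j+1)*M : ℕ) : ℝ) := by
        have hk1 : (k:ℝ)*q < (j:ℝ) + 1 := Nat.lt_floor_add_one _
        have h3 : (k:ℝ) < ((j:ℝ)+1)/q := by
          rw [lt_div_iff₀ hq]; linarith
        calc (k:ℝ) < ((j:ℝ)+1)/q := h3
          _ = ((j:ℝ)+1) * (1/q) := by ring
          _ ≤ ((j:ℝ)+1) * M := mul_le_mul_of_nonneg_left hMq (by positivity)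
          _ = (((j+1)*M : ℕ) : ℝ) := by push_cast; ring
      have hkM : k ≤ (j+1)*M := by
        exact_mod_cast (Nat.cast_le (α := ℝ)).1 h2.le
      calc z ^ k ≤ Z ^ k := h1
        _ ≤ Z ^ ((j+1)*M) := pow_le_pow_right₀ hZ1 hkM
        _ = W ^ (j+1) := by rw [hW, ← pow_mul, Nat.mul_comm]
    have hGk : (Nat.factorial j : ℝ) ≤ 2 * G k := hG k
    have hfact : (0:ℝ) < (Nat.factorial j : ℝ) := by positivity
    have hzk0 : 0 ≤ z ^ k := by positivity
    rw [div_le_div_iff₀ (hGpos k) hfact]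
    calc z ^ k * (Nat.factorial j : ℝ) ≤ W ^ (j+1) * (2 * G k) := by
          apply mul_le_mul hzk hGk hfact.le (by positivity)
      _ = 2 * W ^ (j+1) * G k := by ring
  -- counting: fibers of k ↦ ⌊kq⌋ have size ≤ M
  have hcard : ∀ (K : ℕ) (j : ℕ),
      ((Finset.range K).filter (fun k : ℕ => ⌊(k:ℝ)*q⌋₊ = j)).card ≤ M := by
    intro K j
    set n₀ : ℕ := ⌈(j:ℝ)/q⌉₊ with hn₀
    have hsub : (Finset.range K).filter (fun k : ℕ => ⌊(k:ℝ)*q⌋₊ = j) ⊆ Finset.Ico n₀ (n₀ + M) := by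
      intro k hk
      simp only [Finset.mem_filter, Finset.mem_range] at hk
      obtain ⟨-, hkj⟩ := hk
      have hkq0 : (0:ℝ) ≤ (k:ℝ)*q := by positivity
      have hlow : (j:ℝ) ≤ (k:ℝ)*q := by
        rw [← hkj]; exact Nat.floor_le hkq0
      have hhi : (k:ℝ)*q < (j:ℝ) + 1 := by
        rw [← hkj]; exact Nat.lt_floor_add_one _
      have h1 : (j:ℝ)/q ≤ (k:ℝ) := by
        rw [div_le_iff₀ hq]; linarith
      have hn₀k : n₀ ≤ k := Nat.ceil_le.2 h1
      have h2 : (k:ℝ) < (j:ℝ)/q + 1/q := by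
        rw [← add_div, lt_div_iff₀ hq]; linarith
      have h3 : (k:ℝ) < (n₀:ℝ) + (M:ℝ) := by
        have := Nat.le_ceil ((j:ℝ)/q)
        linarith
      have h4 : k < n₀ + M := by exact_mod_cast h3
      exact Finset.mem_Ico.2 ⟨hn₀k, h4⟩
    calc _ ≤ (Finset.Ico n₀ (n₀ + M)).card := Finset.card_le_card hsub
      _ = M := by rw [Nat.card_Ico]; omega
  -- partial sums bounded
  apply summable_of_sum_range_le (c := (M:ℝ) * B)
  · intro k
    have := hGpos k
    positivity
  · intro K
    calc ∑ k ∈ Finset.range K, z ^ k / G k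
        ≤ ∑ k ∈ Finset.range K, 2 * W ^ (⌊(k:ℝ)*q⌋₊+1) / (Nat.factorial ⌊(k:ℝ)*q⌋₊) :=
          Finset.sum_le_sum (fun k _ => key k)
      _ = ∑ j ∈ (Finset.range K).image (fun k : ℕ => ⌊(k:ℝ)*q⌋₊),
            ((Finset.range K).filter (fun k : ℕ => ⌊(k:ℝ)*q⌋₊ = j)).card •
              (2 * W ^ (j+1) / (Nat.factorial j)) :=
          Finset.sum_comp (fun j => 2 * W ^ (j+1) / (Nat.factorial j)) (fun k : ℕ => ⌊(k:ℝ)*q⌋₊)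
      _ ≤ ∑ j ∈ (Finset.range K).image (fun k : ℕ => ⌊(k:ℝ)*q⌋₊),
            (M:ℝ) * (2 * W ^ (j+1) / (Nat.factorial j)) := by
          apply Finset.sum_le_sum
          intro j _
          rw [nsmul_eq_mul]
          exact mul_le_mul_of_nonneg_right (by exact_mod_cast hcard K j) (hBnn j)
      _ = (M:ℝ) * ∑ j ∈ (Finset.range K).image (fun k : ℕ => ⌊(k:ℝ)*q⌋₊),
            (2 * W ^ (j+1) / (Nat.factorial j)) := by rw [Finset.mul_sum]
      _ ≤ (M:ℝ) * B := by
          apply mul_le_mul_of_nonneg_left _ (by positivity)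
          exact Summable.sum_le_tsum _ (fun j _ => hBnn j) hBsum

lemma gamma_arg_pos {q : ℝ} (hq : 0 < q) (k : ℕ) : 0 < Real.Gamma ((k:ℝ) * q + 1) :=
  Real.Gamma_pos_of_pos (by positivity)

lemma fact_le_gamma_arg {q : ℝ} (hq : 0 < q) (k : ℕ) :
    (Nat.factorial ⌊(k : ℝ) * q⌋₊ : ℝ) ≤ 2 * Real.Gamma ((k:ℝ) * q + 1) := by
  have h0 : (0:ℝ) ≤ (k:ℝ) * q := by positivity
  have := myGamma_fact (y := (k:ℝ)*q + 1) (by linarith)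
  rwa [Nat.floor_add_one h0, Nat.add_sub_cancel] at this

lemma ml_summable {q z : ℝ} (hq : 0 < q) (hz : 0 ≤ z) :
    Summable (fun k : ℕ => z ^ k / Real.Gamma ((k:ℝ) * q + 1)) :=
  summable_aux hq hz (gamma_arg_pos hq) (fact_le_gamma_arg hq)

lemma ml_term_nonneg {q z : ℝ} (hq : 0 < q) (hz : 0 ≤ z) (k : ℕ) :
    0 ≤ z ^ k / Real.Gamma ((k:ℝ) * q + 1) := by
  have := gamma_arg_pos hq k; positivity

lemma ml_one_le {q z : ℝ} (hq : 0 < q) (hz : 0 ≤ z) : 1 ≤ mittagLeffler q z := by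
  have h := Summable.le_tsum (ml_summable hq hz) 0 (fun j _ => ml_term_nonneg hq hz j)
  simpa [mittagLeffler, Real.Gamma_one] using h

lemma ml_mono {q z z' : ℝ} (hq : 0 < q) (hz : 0 ≤ z) (hzz : z ≤ z') :
    mittagLeffler q z ≤ mittagLeffler q z' :=
  Summable.tsum_le_tsum
    (fun k => (div_le_div_iff_of_pos_right (gamma_arg_pos hq k)).2 (pow_le_pow_left₀ hz hzz k))
    (ml_summable hq hz) (ml_summable hq (hz.trans hzz))

lemma ml_zero {q : ℝ} (hq : 0 < q) : mittagLeffler q 0 = 1 := by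
  rw [mittagLeffler, tsum_eq_single 0 (fun k hk => by
    rw [zero_pow hk, zero_div])]
  simp [Real.Gamma_one]

lemma real_beta {u v : ℝ} (hu : 0 < u) (hv : 0 < v) :
    ∫ s in (0:ℝ)..1, s ^ (u-1) * (1-s) ^ (v-1)
      = Real.Gamma u * Real.Gamma v / Real.Gamma (u+v) := by
  have h := Complex.Gamma_mul_Gamma_eq_betaIntegral
    (s := (u:ℂ)) (t := (v:ℂ)) (by simpa using hu) (by simpa using hv)
  have hbeta : Complex.betaIntegral (u:ℂ) (v:ℂ)
      = ((∫ s in (0:ℝ)..1, s ^ (u-1) * (1-s) ^ (v-1) : ℝ) : ℂ) := by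
    rw [Complex.betaIntegral, ← intervalIntegral.integral_ofReal]
    apply intervalIntegral.integral_congr
    intro s hs
    rw [uIcc_of_le (by norm_num : (0:ℝ) ≤ 1)] at hs
    obtain ⟨hs0, hs1⟩ := hs
    show (s:ℂ) ^ ((u:ℂ)-1) * ((1:ℂ)-(s:ℂ)) ^ ((v:ℂ)-1) = _
    rw [show ((u:ℂ)-1) = ((u-1 : ℝ) : ℂ) by push_cast; ring,
      show ((v:ℂ)-1) = ((v-1:ℝ):ℂ) by push_cast; ring,
      show ((1:ℂ) - (s:ℂ)) = ((1-s : ℝ):ℂ) by push_cast; ring,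
      ← Complex.ofReal_cpow hs0, ← Complex.ofReal_cpow (by linarith : (0:ℝ) ≤ 1 - s),
      ← Complex.ofReal_mul]
  rw [hbeta, ← Complex.ofReal_add, Complex.Gamma_ofReal, Complex.Gamma_ofReal,
    Complex.Gamma_ofReal, ← Complex.ofReal_mul, ← Complex.ofReal_mul] at h
  have h2 : Real.Gamma u * Real.Gamma v
      = Real.Gamma (u+v) * ∫ s in (0:ℝ)..1, s ^ (u-1) * (1-s) ^ (v-1) := by
    exact_mod_cast h
  have h3 : Real.Gamma (u+v) ≠ 0 := (Real.Gamma_pos_of_pos (by linarith)).ne'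
  field_simp [h3] at h2 ⊢
  linarith [h2]

-- continuity of s ↦ s ^ b for b ≥ 0
lemma contOn_rpow {b : ℝ} (hb : 0 ≤ b) (s : Set ℝ) :
    ContinuousOn (fun x : ℝ => x ^ b) s := by
  rcases eq_or_lt_of_le hb with h | h
  · simp only [← h, Real.rpow_zero]; exact continuousOn_const
  · intro x _
    exact (Real.continuousAt_rpow_const x b (Or.inr h.le)).continuousWithinAt

-- integrability of kernel
lemma kernel_intble {q : ℝ} (hq : 0 < q) (t : ℝ) :
    IntervalIntegrable (fun s => (t - s) ^ (q-1)) volume 0 t := by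
  have h1 : IntervalIntegrable (fun s : ℝ => s ^ (q-1)) volume 0 t :=
    intervalIntegral.intervalIntegrable_rpow' (by linarith)
  have h2 := h1.comp_sub_left t
  simpa using h2.symm

lemma kernel_mul_intble {q : ℝ} (hq : 0 < q) {t : ℝ} (ht : 0 ≤ t)
    {g : ℝ → ℝ} (hg : ContinuousOn g (Icc 0 t)) :
    IntervalIntegrable (fun s => (t - s) ^ (q-1) * g s) volume 0 t :=
  (kernel_intble hq t).mul_continuousOn (by rwa [uIcc_of_le ht])

lemma kernel_integral {q : ℝ} (hq : 0 < q) {t : ℝ} (ht : 0 < t) :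
    ∫ s in (0:ℝ)..t, (t - s) ^ (q-1) = t ^ q / q := by
  rw [show (fun s => (t - s) ^ (q-1)) = (fun s => ((fun u : ℝ => u ^ (q-1)) (t - s))) from rfl,
    intervalIntegral.integral_comp_sub_left (fun u : ℝ => u ^ (q-1)) t]
  simp only [sub_self, sub_zero]
  rw [integral_rpow (Or.inl (by linarith))]
  rw [sub_add_cancel, Real.zero_rpow hq.ne', sub_zero]

lemma kernel_beta {q b : ℝ} (hq : 0 < q) (hb : 0 ≤ b) {t : ℝ} (ht : 0 < t) :
    ∫ s in (0:ℝ)..t, (t - s) ^ (q-1) * s ^ b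
      = Real.Gamma q * Real.Gamma (b+1) / Real.Gamma (q+b+1) * t ^ (q+b) := by
  have key : t • ∫ x in (0:ℝ)..1, (fun s => (t - s) ^ (q-1) * s ^ b) (t * x)
      = ∫ s in (0:ℝ)..t, (t - s) ^ (q-1) * s ^ b := by
    have := intervalIntegral.smul_integral_comp_mul_left
      (fun s => (t - s) ^ (q-1) * s ^ b) t (a := 0) (b := 1)
    simpa using this
  rw [← key]
  have hcongr : ∫ x in (0:ℝ)..1, (fun s => (t - s) ^ (q-1) * s ^ b) (t * x)
      = ∫ x in (0:ℝ)..1, (t ^ (q-1) * t ^ b) * (x ^ b * (1-x) ^ (q-1)) := by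
    apply intervalIntegral.integral_congr
    intro x hx
    rw [uIcc_of_le (by norm_num : (0:ℝ) ≤ 1)] at hx
    obtain ⟨hx0, hx1⟩ := hx
    simp only
    rw [show t - t * x = t * (1 - x) by ring,
      Real.mul_rpow ht.le (by linarith), Real.mul_rpow ht.le hx0]
    ring
  rw [hcongr, intervalIntegral.integral_const_mul]
  have hbeta : ∫ x in (0:ℝ)..1, x ^ b * (1-x) ^ (q-1)
      = Real.Gamma (b+1) * Real.Gamma q / Real.Gamma (b+1+q) := by
    have := real_beta (u := b+1) (v := q) (by linarith) hq
    simpa using this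
  rw [hbeta]
  rw [smul_eq_mul]
  have ht1 : t * (t ^ (q-1) * t ^ b) = t ^ (q+b) := by
    rw [show t * (t ^ (q-1) * t ^ b) = (t ^ (1:ℝ) * t ^ (q-1)) * t ^ b by
      rw [Real.rpow_one]; ring,
      ← Real.rpow_add ht, ← Real.rpow_add ht]
    norm_num
  have harg : b + 1 + q = q + b + 1 := by ring
  rw [show t * (t ^ (q - 1) * t ^ b * (Real.Gamma (b+1) * Real.Gamma q / Real.Gamma (b+1+q)))
      = (t * (t ^ (q-1) * t ^ b)) * (Real.Gamma (b+1) * Real.Gamma q / Real.Gamma (b+1+q)) by ring,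
    ht1, harg]
  ring

lemma ml_comp_contOn {q a T : ℝ} (hq : 0 < q) (ha : 0 ≤ a) (hT : 0 ≤ T) :
    ContinuousOn (fun s : ℝ => mittagLeffler q (a * s ^ q)) (Icc 0 T) := by
  unfold mittagLeffler
  apply continuousOn_tsum (u := fun k : ℕ => (a * T ^ q) ^ k / Real.Gamma ((k:ℝ) * q + 1))
  · intro k
    exact ((continuousOn_const.mul (contOn_rpow hq.le _)).pow k).div_const _
  · exact ml_summable hq (by positivity)
  · intro k s hs
    have hs0 : (0:ℝ) ≤ s := hs.1
    have hsT : s ≤ T := hs.2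
    have h1 : (0:ℝ) ≤ a * s ^ q := by positivity
    have h2 : a * s ^ q ≤ a * T ^ q :=
      mul_le_mul_of_nonneg_left (Real.rpow_le_rpow hs0 hsT hq.le) ha
    rw [Real.norm_eq_abs, abs_div, abs_of_nonneg (by positivity : (0:ℝ) ≤ (a * s ^ q) ^ k),
      abs_of_nonneg (gamma_arg_pos hq k).le]
    exact (div_le_div_iff_of_pos_right (gamma_arg_pos hq k)).2 (pow_le_pow_left₀ h1 h2 k)

lemma psi_key {q a t : ℝ} (hq : 0 < q) (ha : 0 ≤ a) (ht : 0 < t) :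
    a * (Real.Gamma q)⁻¹ * ∫ s in (0:ℝ)..t, (t - s) ^ (q-1) * mittagLeffler q (a * s ^ q)
      = mittagLeffler q (a * t ^ q) - 1 := by
  have hΓ : 0 < Real.Gamma q := Real.Gamma_pos_of_pos hq
  set z : ℝ := a * t ^ q with hzdef
  have hz : 0 ≤ z := by positivity
  set g : ℕ → ℝ → ℝ :=
    fun k s => (t - s) ^ (q-1) * (a ^ k * s ^ ((k:ℝ)*q) / Real.Gamma ((k:ℝ)*q + 1)) with hgdef
  set J : ℕ → ℝ := fun k => Real.Gamma q * (a ^ k * t ^ (q + (k:ℝ)*q))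
      / Real.Gamma (q + (k:ℝ)*q + 1) with hJdef
  -- integral of each term
  have hgval : ∀ k : ℕ, ∫ s in (0:ℝ)..t, g k s = J k := by
    intro k
    have hb : (0:ℝ) ≤ (k:ℝ)*q := by positivity
    have h1 : ∫ s in (0:ℝ)..t, g k s
        = (a ^ k / Real.Gamma ((k:ℝ)*q + 1)) * ∫ s in (0:ℝ)..t, (t - s) ^ (q-1) * s ^ ((k:ℝ)*q) := by
      rw [← intervalIntegral.integral_const_mul]
      apply intervalIntegral.integral_congr
      intro s _
      simp only [hgdef]
      ring
    rw [h1, kernel_beta hq hb ht, hJdef]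
    have hΓk : Real.Gamma ((k:ℝ)*q + 1) ≠ 0 := (gamma_arg_pos hq k).ne'
    field_simp
  -- summability of J
  have hGpos : ∀ k : ℕ, 0 < Real.Gamma (q + (k:ℝ)*q + 1) :=
    fun k => Real.Gamma_pos_of_pos (by positivity)
  have hJsum : Summable J := by
    have hsum0 : Summable (fun k : ℕ => z ^ k / Real.Gamma (q + (k:ℝ)*q + 1)) := by
      apply summable_aux hq hz hGpos
      intro k
      have hnn : (0:ℝ) ≤ q + (k:ℝ)*q := by positivity
      have h5 := myGamma_fact (y := q + (k:ℝ)*q + 1) (by linarith)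
      rw [Nat.floor_add_one hnn, Nat.add_sub_cancel] at h5
      refine le_trans ?_ h5
      exact_mod_cast Nat.factorial_le (Nat.floor_mono (by linarith : (k:ℝ)*q ≤ q + (k:ℝ)*q))
    apply ((hsum0.mul_left (Real.Gamma q * t ^ q)).congr ?_)
    intro k
    have h2 : t ^ (q + (k:ℝ)*q) = t ^ q * (t ^ q) ^ k := by
      rw [Real.rpow_add ht, ← Real.rpow_natCast (t ^ q) k, ← Real.rpow_mul ht.le]
      ring_nf
    show Real.Gamma q * t ^ q * (z ^ k / Real.Gamma (q + (k:ℝ)*q + 1)) = J k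
    rw [hJdef]
    dsimp only
    rw [h2, hzdef, mul_pow]
    ring
  have hJnn : ∀ k : ℕ, 0 ≤ J k := by
    intro k
    rw [hJdef]
    dsimp only
    have h1 := hGpos k
    have h2 : (0:ℝ) ≤ t ^ (q + (k:ℝ)*q) := Real.rpow_nonneg ht.le _
    positivity
  -- measurability
  have hmeas : ∀ k : ℕ, AEStronglyMeasurable (g k) (volume.restrict (Ioc 0 t)) := by
    intro k
    apply Measurable.aestronglyMeasurable
    exact ((measurable_const.sub measurable_id).pow measurable_const).mul
      (((measurable_id.pow measurable_const).const_mul _).div_const _)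
  -- integrability
  have hgint : ∀ k : ℕ, IntegrableOn (g k) (Ioc 0 t) volume := by
    intro k
    have h1 : IntervalIntegrable (g k) volume 0 t := by
      have := kernel_mul_intble hq ht.le
        (g := fun s => a ^ k * s ^ ((k:ℝ)*q) / Real.Gamma ((k:ℝ)*q + 1))
        ((continuousOn_const.mul (contOn_rpow (by positivity) _)).div_const _)
      exact this
    have h2 := h1.def'
    rwa [uIoc_of_le ht.le] at h2
  have hgnn : ∀ k : ℕ, ∀ s ∈ Ioc 0 t, 0 ≤ g k s := by
    intro k s hs
    simp only [hgdef]
    exact mul_nonneg (Real.rpow_nonneg (by linarith [hs.2]) _)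
      (div_nonneg (mul_nonneg (pow_nonneg ha _) (Real.rpow_nonneg hs.1.le _))
        (gamma_arg_pos hq k).le)
  have hlint : ∀ k : ℕ, ∫⁻ s in Ioc 0 t, ‖g k s‖ₑ ∂volume = ENNReal.ofReal (J k) := by
    intro k
    rw [← ofReal_integral_norm_eq_lintegral_enorm (hgint k)]
    congr 1
    calc ∫ s in Ioc 0 t, ‖g k s‖ = ∫ s in Ioc 0 t, g k s := by
          apply setIntegral_congr_fun measurableSet_Ioc
          intro s hs
          exact Real.norm_of_nonneg (hgnn k s hs)
      _ = ∫ s in (0:ℝ)..t, g k s := (intervalIntegral.integral_of_le ht.le).symm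
      _ = J k := hgval k
  have hswap : ∫ s in Ioc 0 t, (∑' k, g k s) ∂volume = ∑' k, ∫ s in Ioc 0 t, g k s := by
    apply integral_tsum hmeas
    have h1 : ∑' k : ℕ, ∫⁻ s in Ioc 0 t, ‖g k s‖ₑ ∂volume = ENNReal.ofReal (∑' k, J k) := by
      rw [tsum_congr hlint, ← ENNReal.ofReal_tsum_of_nonneg hJnn hJsum]
    rw [h1]
    exact ENNReal.ofReal_ne_top
  have hmlsum : ∫ s in (0:ℝ)..t, (t - s) ^ (q-1) * mittagLeffler q (a * s ^ q) = ∑' k, J k := by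
    rw [intervalIntegral.integral_of_le ht.le]
    have hcg : EqOn (fun s => (t - s) ^ (q-1) * mittagLeffler q (a * s ^ q))
        (fun s => ∑' k, g k s) (Ioc 0 t) := by
      intro s hs
      simp only
      have hml : mittagLeffler q (a * s ^ q)
          = ∑' k : ℕ, a ^ k * s ^ ((k:ℝ)*q) / Real.Gamma ((k:ℝ)*q + 1) := by
        rw [mittagLeffler]
        apply tsum_congr
        intro k
        congr 1
        rw [mul_pow, ← Real.rpow_natCast (s ^ q) k, ← Real.rpow_mul hs.1.le]
        ring_nf
      rw [hml, ← tsum_mul_left]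
    rw [setIntegral_congr_fun measurableSet_Ioc hcg, hswap]
    exact tsum_congr (fun k => by
      rw [← intervalIntegral.integral_of_le ht.le]; exact hgval k)
  rw [hmlsum, ← tsum_mul_left]
  have hterm : ∀ k : ℕ, a * (Real.Gamma q)⁻¹ * J k
      = z ^ (k+1) / Real.Gamma ((↑(k+1) : ℝ) * q + 1) := by
    intro k
    have harg : ((↑(k+1) : ℝ) * q + 1) = q + (k:ℝ)*q + 1 := by push_cast; ring
    rw [hJdef]
    dsimp only
    rw [harg]
    have h2 : t ^ (q + (k:ℝ)*q) = t ^ q * (t ^ q) ^ k := by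
      rw [Real.rpow_add ht, ← Real.rpow_natCast (t ^ q) k, ← Real.rpow_mul ht.le]
      ring_nf
    rw [h2, hzdef, mul_pow]
    have hΓ' := (hGpos k).ne'
    field_simp
    ring
  rw [tsum_congr hterm]
  have hsplit := Summable.tsum_eq_zero_add (ml_summable hq hz)
  have h00 : z ^ 0 / Real.Gamma ((0:ℕ) * q + 1) = 1 := by
    norm_num [Real.Gamma_one]
  rw [h00] at hsplit
  rw [mittagLeffler]
  push_cast at hsplit ⊢
  linarith [hsplit]

set_option maxHeartbeats 2000000 in
/-- Finite time stability of the semilinear fractional multi-delay system. -/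
theorem finite_time_stability
    (n nu p : ℕ) (q T τm δ ε qu σ b₀ L m : ℝ)
    (hq : 0 < q) (hq1 : q ≤ 1) (hT : 0 < T) (hτ : 0 ≤ τm)
    (hδ : 0 < δ) (hε : 0 < ε) (hqu : 0 < qu)
    (A₀ : (Fin n → ℝ) →L[ℝ] (Fin n → ℝ))
    (A : Fin p → ((Fin n → ℝ) →L[ℝ] (Fin n → ℝ)))
    (B₀ : (Fin nu → ℝ) →L[ℝ] (Fin n → ℝ))
    (τ : Fin p → ℝ) (hτi : ∀ i, 0 < τ i ∧ τ i ≤ τm)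
    (f : ℝ → (Fin n → ℝ) → (Fin n → ℝ))
    (hf : ∀ t x, ‖f t x‖ ≤ L * ‖x‖ + m)
    (hσ : ‖A₀‖ ≤ σ) (hσi : ∀ i, ‖A i‖ ≤ σ) (hb : ‖B₀‖ ≤ b₀)
    (u : ℝ → Fin nu → ℝ) (hu : ∀ t ∈ Icc (0:ℝ) T, ‖u t‖ ≤ qu)
    (x : ℝ → Fin n → ℝ)
    (hx_cont : ContinuousOn x (Icc (-τm) T))
    (hψ : ∀ t ∈ Icc (-τm) (0:ℝ), ‖x t‖ < δ)
    (hsol : ∀ t ∈ Icc (0:ℝ) T,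
      x t = x 0 + (Real.Gamma q)⁻¹ •
        ∫ s in (0:ℝ)..t, (t - s) ^ (q - 1) •
          (A₀ (x s) + (∑ i : Fin p, A i (x (s - τ i))) + B₀ (u s) + f s (x s)))
    (hcrit : (1 + (m + b₀ * qu) * T ^ q / (δ * Real.Gamma (q + 1)))
        * mittagLeffler q ((L + σ * (p + 1)) * T ^ q) < ε / δ) :
    ∀ t ∈ Icc (0:ℝ) T, ‖x t‖ < ε := by
  intro t₀ ht₀
  rcases Nat.eq_zero_or_pos n with hn | hn
  · subst hn
    have hx0 : x t₀ = 0 := funext (fun i => i.elim0)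
    rw [hx0, norm_zero]; exact hε
  haveI : Nonempty (Fin n) := ⟨⟨0, hn⟩⟩
  -- basic positivity facts
  have hσ0 : 0 ≤ σ := le_trans (norm_nonneg _) hσ
  have hb0 : 0 ≤ b₀ := le_trans (norm_nonneg _) hb
  have hm0 : 0 ≤ m := by
    have h1 := hf 0 0
    have h2 : ‖(0 : Fin n → ℝ)‖ = 0 := norm_zero
    rw [h2, mul_zero, zero_add] at h1
    exact le_trans (norm_nonneg _) h1
  have hL0 : 0 ≤ L := by
    by_contra hL
    push_neg at hL
    set R : ℝ := (m+1)/(-L) with hR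
    have hRpos : 0 < R := div_pos (by linarith) (by linarith)
    have hnorm : ‖(fun _ => R : Fin n → ℝ)‖ = R := by
      rw [pi_norm_const, Real.norm_of_nonneg hRpos.le]
    have h1 := hf 0 (fun _ => R)
    rw [hnorm] at h1
    have h2 : L * R = -(m+1) := by
      rw [hR]
      rw [mul_div_assoc']
      rw [div_eq_iff (show (-L) ≠ 0 by linarith)]
      ring
    rw [h2] at h1
    linarith [norm_nonneg (f 0 (fun _ => R))]
  set a : ℝ := L + σ * ((p:ℝ) + 1) with hadef
  set c : ℝ := m + b₀ * qu with hcdef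
  have ha0 : 0 ≤ a := by
    rw [hadef]; have : (0:ℝ) ≤ (p:ℝ) + 1 := by positivity
    nlinarith
  have hc0 : 0 ≤ c := by rw [hcdef]; nlinarith
  have hΓq : 0 < Real.Gamma q := Real.Gamma_pos_of_pos hq
  have hΓq1 : 0 < Real.Gamma (q+1) := Real.Gamma_pos_of_pos (by linarith)
  have hΓrec : Real.Gamma (q+1) = q * Real.Gamma q := Real.Gamma_add_one hq.ne'
  have hTq : 0 < T ^ q := Real.rpow_pos_of_pos hT q
  set D : ℝ := δ + c * T ^ q / Real.Gamma (q+1) with hDdef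
  have hδD : δ ≤ D := by
    rw [hDdef]
    have : 0 ≤ c * T^q / Real.Gamma (q+1) := by positivity
    linarith
  set E : ℝ := mittagLeffler q (a * T ^ q) with hEdef
  have hE1 : 1 ≤ E := by rw [hEdef]; exact ml_one_le hq (by positivity)
  have hE0 : 0 < E := lt_of_lt_of_le one_pos hE1
  have hDE : D * E < ε := by
    have h1 : D = δ * (1 + c * T^q / (δ * Real.Gamma (q+1))) := by
      rw [hDdef]; field_simp
    calc D * E = δ * ((1 + c * T^q / (δ * Real.Gamma (q+1))) * E) := by rw [h1]; ring
      _ < δ * (ε/δ) := by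
          apply mul_lt_mul_of_pos_left _ hδ
          exact hcrit
      _ = ε := by field_simp
  -- functions
  set k : ℝ → ℝ := fun s => max δ ‖x s‖ with hkdef
  have hxk : ∀ s : ℝ, ‖x s‖ ≤ k s := fun s => le_max_right _ _
  have hsub : Icc (0:ℝ) T ⊆ Icc (-τm) T := Icc_subset_Icc (by linarith) le_rfl
  have hkcont : ContinuousOn k (Icc 0 T) :=
    fun s hs => (continuousWithinAt_const).max (((hx_cont.mono hsub).norm) s hs)
  set ψ : ℝ → ℝ := fun s => mittagLeffler q (a * s ^ q) with hψdef
  have hψcont : ContinuousOn ψ (Icc 0 T) := by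
    rw [hψdef]; exact ml_comp_contOn hq ha0 hT.le
  have hψ1 : ∀ s : ℝ, 0 ≤ s → 1 ≤ ψ s := by
    intro s hs
    rw [hψdef]
    exact ml_one_le hq (by positivity)
  have hψmono : ∀ s s' : ℝ, 0 ≤ s → s ≤ s' → ψ s ≤ ψ s' := by
    intro s s' h0 hss
    rw [hψdef]
    exact ml_mono hq (by positivity)
      (mul_le_mul_of_nonneg_left (Real.rpow_le_rpow h0 hss hq.le) ha0)
  have hx0δ : ‖x 0‖ < δ := hψ 0 ⟨by linarith, le_rfl⟩
  -- MAIN CLAIM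
  have main : ∀ η : ℝ, 0 < η → ∀ s ∈ Icc (0:ℝ) T, k s < (D + η) * ψ s := by
    intro η hη
    by_contra hcon
    push_neg at hcon
    obtain ⟨t₁, ht₁, ht₁'⟩ := hcon
    set S : Set ℝ := Icc 0 T ∩ {s | (D + η) * ψ s ≤ k s} with hSdef
    have hSne : S.Nonempty := ⟨t₁, ht₁, ht₁'⟩
    have hSbdd : BddBelow S := ⟨0, fun y hy => hy.1.1⟩
    have hScl : IsClosed S := by
      have h1 : ContinuousOn (fun s => k s - (D + η) * ψ s) (Icc 0 T) :=
        hkcont.sub (continuousOn_const.mul hψcont)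
      have h2 := h1.preimage_isClosed_of_isClosed isClosed_Icc isClosed_Ici (t := Ici 0)
      have h3 : S = Icc 0 T ∩ (fun s => k s - (D + η) * ψ s) ⁻¹' (Ici 0) := by
        rw [hSdef]
        ext s
        simp only [mem_inter_iff, mem_setOf_eq, mem_preimage, mem_Ici, sub_nonneg]
      rw [h3]; exact h2
    set t' : ℝ := sInf S with ht'def
    have ht'S : t' ∈ S := hScl.csInf_mem hSne hSbdd
    obtain ⟨⟨ht'0, ht'T⟩, ht'ineq⟩ := ht'S
    simp only [mem_setOf_eq] at ht'ineq
    have hψ0 : ψ 0 = 1 := by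
      rw [hψdef]
      simp only [Real.zero_rpow hq.ne', mul_zero]
      exact ml_zero hq
    have hDη0 : 0 < D + η := by linarith
    have ht'pos : 0 < t' := by
      rcases eq_or_lt_of_le ht'0 with h | h
      · exfalso
        rw [← h] at ht'ineq
        rw [hψ0, mul_one] at ht'ineq
        have hk0 : k 0 = δ := max_eq_left hx0δ.le
        rw [hk0] at ht'ineq
        linarith
      · exact h
    have hlt : ∀ s : ℝ, 0 ≤ s → s < t' → k s < (D + η) * ψ s := by
      intro s h0 hst
      by_contra hcon2
      push_neg at hcon2
      have hmem : s ∈ S := ⟨⟨h0, le_trans hst.le ht'T⟩, hcon2⟩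
      have := csInf_le hSbdd hmem
      rw [← ht'def] at this
      linarith
    -- the integral inequality at t'
    have hGcont : ContinuousOn (fun s => (a*(D+η)) * ψ s + c) (Icc 0 t') :=
      ((continuousOn_const.mul (hψcont.mono (Icc_subset_Icc le_rfl ht'T))).add continuousOn_const)
    have hGint : IntervalIntegrable
        (fun s => (t'-s)^(q-1) * ((a*(D+η)) * ψ s + c)) volume 0 t' :=
      kernel_mul_intble hq ht'pos.le hGcont
    have hae : ∀ᵐ s ∂(volume.restrict (Set.uIoc 0 t')),
        ‖(t' - s) ^ (q - 1) •
          (A₀ (x s) + (∑ i : Fin p, A i (x (s - τ i))) + B₀ (u s) + f s (x s))‖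
          ≤ (t'-s)^(q-1) * ((a*(D+η)) * ψ s + c) := by
      rw [uIoc_of_le ht'pos.le]
      have hne : ∀ᵐ s ∂(volume.restrict (Ioc 0 t')), s ≠ t' := by
        apply ae_restrict_of_ae
        have h0 : {s : ℝ | ¬ s ≠ t'} = {t'} := by ext s; simp
        rw [ae_iff, h0]
        exact measure_singleton t'
      filter_upwards [hne, ae_restrict_mem measurableSet_Ioc] with s hsne hsmem
      obtain ⟨hs0, hst'⟩ := hsmem
      have hslt : s < t' := lt_of_le_of_ne hst' hsne
      have hsT : s ≤ T := le_trans hst' ht'T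
      have hkernel : 0 ≤ (t' - s)^(q-1) := Real.rpow_nonneg (by linarith) _
      rw [norm_smul, Real.norm_eq_abs, abs_of_nonneg hkernel]
      apply mul_le_mul_of_nonneg_left _ hkernel
      have hψs1 : 1 ≤ ψ s := hψ1 s hs0.le
      have hxs : ‖x s‖ ≤ (D+η) * ψ s := le_trans (hxk s) (hlt s hs0.le hslt).le
      have hDψ : δ ≤ (D+η) * ψ s := by nlinarith
      have hdelay : ∀ i : Fin p, ‖x (s - τ i)‖ ≤ (D+η) * ψ s := by
        intro i
        obtain ⟨hτip, hτim⟩ := hτi i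
        rcases le_or_gt (s - τ i) 0 with hneg | hposi
        · have hmem : s - τ i ∈ Icc (-τm) (0:ℝ) := ⟨by linarith, hneg⟩
          have := (hψ _ hmem).le
          linarith
        · have h1 : s - τ i < t' := by linarith
          have h2 := hlt _ hposi.le h1
          have h3 : ψ (s - τ i) ≤ ψ s := hψmono _ _ hposi.le (by linarith)
          have h4 := hxk (s - τ i)
          nlinarith
      -- assemble the norm bound
      have hA0 : ‖A₀ (x s)‖ ≤ σ * ((D+η) * ψ s) :=
        le_trans (A₀.le_opNorm _) (mul_le_mul hσ hxs (norm_nonneg _) hσ0)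
      have hsum : ‖∑ i : Fin p, A i (x (s - τ i))‖ ≤ (p:ℝ) * (σ * ((D+η) * ψ s)) := by
        calc ‖∑ i : Fin p, A i (x (s - τ i))‖ ≤ ∑ i : Fin p, ‖A i (x (s - τ i))‖ :=
              norm_sum_le _ _
          _ ≤ ∑ _i : Fin p, σ * ((D+η) * ψ s) :=
              Finset.sum_le_sum (fun i _ =>
                le_trans ((A i).le_opNorm _)
                  (mul_le_mul (hσi i) (hdelay i) (norm_nonneg _) hσ0))
          _ = (p:ℝ) * (σ * ((D+η) * ψ s)) := by
              rw [Finset.sum_const, Finset.card_univ, Fintype.card_fin, nsmul_eq_mul]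
      have hB : ‖B₀ (u s)‖ ≤ b₀ * qu :=
        le_trans (B₀.le_opNorm _) (mul_le_mul hb (hu s ⟨hs0.le, hsT⟩) (norm_nonneg _) hb0)
      have hfs : ‖f s (x s)‖ ≤ L * ((D+η) * ψ s) + m := by
        have h1 := hf s (x s)
        have h2 : L * ‖x s‖ ≤ L * ((D+η) * ψ s) := mul_le_mul_of_nonneg_left hxs hL0
        linarith
      calc ‖A₀ (x s) + (∑ i : Fin p, A i (x (s - τ i))) + B₀ (u s) + f s (x s)‖
          ≤ ‖A₀ (x s) + (∑ i : Fin p, A i (x (s - τ i))) + B₀ (u s)‖ + ‖f s (x s)‖ :=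
            norm_add_le _ _
        _ ≤ (‖A₀ (x s) + (∑ i : Fin p, A i (x (s - τ i)))‖ + ‖B₀ (u s)‖) + ‖f s (x s)‖ :=
            add_le_add_left (norm_add_le _ _) _
        _ ≤ ((‖A₀ (x s)‖ + ‖∑ i : Fin p, A i (x (s - τ i))‖) + ‖B₀ (u s)‖) + ‖f s (x s)‖ :=
            add_le_add_left (add_le_add_left (norm_add_le _ _) _) _
        _ ≤ ((σ * ((D+η) * ψ s) + (p:ℝ) * (σ * ((D+η) * ψ s))) + b₀ * qu)
              + (L * ((D+η) * ψ s) + m) := by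
            apply add_le_add _ hfs
            exact add_le_add (add_le_add hA0 hsum) hB
        _ = (a*(D+η)) * ψ s + c := by rw [hadef, hcdef]; ring
    have hnorm1 : ‖x t'‖ ≤ ‖x 0‖ + (Real.Gamma q)⁻¹ *
        |∫ s in (0:ℝ)..t', (t'-s)^(q-1) * ((a*(D+η)) * ψ s + c)| := by
      rw [hsol t' ⟨ht'0, ht'T⟩]
      refine le_trans (norm_add_le _ _) ?_
      apply add_le_add_right
      rw [norm_smul, Real.norm_eq_abs, abs_of_nonneg (inv_nonneg.2 hΓq.le)]
      apply mul_le_mul_of_nonneg_left _ (inv_nonneg.2 hΓq.le)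
      exact intervalIntegral.norm_integral_le_abs_of_norm_le hae hGint
    -- compute the integral
    have hψint : IntervalIntegrable (fun s => (t'-s)^(q-1) * ψ s) volume 0 t' :=
      kernel_mul_intble hq ht'pos.le (hψcont.mono (Icc_subset_Icc le_rfl ht'T))
    have hsplit : ∫ s in (0:ℝ)..t', (t'-s)^(q-1) * ((a*(D+η)) * ψ s + c)
        = (a*(D+η)) * (∫ s in (0:ℝ)..t', (t'-s)^(q-1) * ψ s) + c * (t'^q/q) := by
      have h1 : IntervalIntegrable
          (fun s => (a*(D+η)) * ((t'-s)^(q-1) * ψ s)) volume 0 t' :=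
        hψint.const_mul _
      have h2 : IntervalIntegrable (fun s => c * (t'-s)^(q-1)) volume 0 t' :=
        (kernel_intble hq t').const_mul c
      calc ∫ s in (0:ℝ)..t', (t'-s)^(q-1) * ((a*(D+η)) * ψ s + c)
          = ∫ s in (0:ℝ)..t',
              ((a*(D+η)) * ((t'-s)^(q-1) * ψ s) + c * (t'-s)^(q-1)) :=
            intervalIntegral.integral_congr (fun s _ => by ring)
        _ = (∫ s in (0:ℝ)..t', (a*(D+η)) * ((t'-s)^(q-1) * ψ s))
            + ∫ s in (0:ℝ)..t', c * (t'-s)^(q-1) :=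
            intervalIntegral.integral_add h1 h2
        _ = (a*(D+η)) * (∫ s in (0:ℝ)..t', (t'-s)^(q-1) * ψ s) + c * (t'^q/q) := by
            rw [intervalIntegral.integral_const_mul, intervalIntegral.integral_const_mul,
              kernel_integral hq ht'pos]
    have hkey : a * (Real.Gamma q)⁻¹ * ∫ s in (0:ℝ)..t', (t'-s)^(q-1) * ψ s
        = ψ t' - 1 := by
      simp only [hψdef]
      exact psi_key hq ha0 ht'pos
    have hval : (Real.Gamma q)⁻¹ *
        (∫ s in (0:ℝ)..t', (t'-s)^(q-1) * ((a*(D+η)) * ψ s + c))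
        = (D+η) * (ψ t' - 1) + c * t'^q / Real.Gamma (q+1) := by
      rw [hsplit, ← hkey, hΓrec]
      field_simp
    have ht'q : (0:ℝ) ≤ t'^q := Real.rpow_nonneg ht'0 q
    have hψt'1 : 1 ≤ ψ t' := hψ1 t' ht'0
    have hvalnn : 0 ≤ (Real.Gamma q)⁻¹ *
        (∫ s in (0:ℝ)..t', (t'-s)^(q-1) * ((a*(D+η)) * ψ s + c)) := by
      rw [hval]
      have h1 : 0 ≤ c * t'^q / Real.Gamma (q+1) := by positivity
      have h2 : 0 ≤ (D+η) * (ψ t' - 1) := mul_nonneg hDη0.le (by linarith)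
      exact add_nonneg h2 h1
    have hintnn : 0 ≤ ∫ s in (0:ℝ)..t', (t'-s)^(q-1) * ((a*(D+η)) * ψ s + c) := by
      by_contra hneg
      push_neg at hneg
      have : (Real.Gamma q)⁻¹ *
          (∫ s in (0:ℝ)..t', (t'-s)^(q-1) * ((a*(D+η)) * ψ s + c)) < 0 :=
        mul_neg_of_pos_of_neg (inv_pos.2 hΓq) hneg
      exact absurd this (not_lt.2 hvalnn)
    rw [abs_of_nonneg hintnn] at hnorm1
    have ht'Tq : t'^q ≤ T^q := Real.rpow_le_rpow ht'0 ht'T hq.le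
    have hfinal : ‖x t'‖ < (D+η) * ψ t' - η := by
      have h1 : c * t'^q / Real.Gamma (q+1) ≤ c * T^q / Real.Gamma (q+1) :=
        (div_le_div_iff_of_pos_right hΓq1).2 (mul_le_mul_of_nonneg_left ht'Tq hc0)
      have h2 : ‖x 0‖ + ((D+η) * (ψ t' - 1) + c * t'^q / Real.Gamma (q+1))
          < δ + (D+η) * ψ t' - (D+η) + c * T^q / Real.Gamma (q+1) := by
        nlinarith
      calc ‖x t'‖ ≤ ‖x 0‖ + ((D+η) * (ψ t' - 1) + c * t'^q / Real.Gamma (q+1)) := by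
            rw [← hval]; exact hnorm1
        _ < δ + (D+η) * ψ t' - (D+η) + c * T^q / Real.Gamma (q+1) := h2
        _ = (D+η) * ψ t' - η := by rw [hDdef]; ring
    have hkt' : k t' < (D+η) * ψ t' := by
      apply max_lt _ (by linarith)
      nlinarith
    exact absurd ht'ineq (not_le.2 hkt')
  -- conclude
  have hψT : ψ T = E := by rw [hψdef, hEdef]
  have h1 : ∀ η : ℝ, 0 < η → ‖x t₀‖ < D * E + η * E := by
    intro η hη
    have h2 := main η hη t₀ ht₀
    have h3 : ψ t₀ ≤ E := by
      rw [← hψT]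
      exact hψmono t₀ T ht₀.1 ht₀.2
    have h4 : (D+η) * ψ t₀ ≤ (D+η) * E :=
      mul_le_mul_of_nonneg_left h3 (by linarith)
    calc ‖x t₀‖ ≤ k t₀ := hxk t₀
      _ < (D+η) * ψ t₀ := h2
      _ ≤ (D+η) * E := h4
      _ = D * E + η * E := by ring
  have h2 : ‖x t₀‖ ≤ D * E := by
    apply le_of_forall_pos_lt_add
    intro η' hη'
    have h3 := h1 (η' / E) (div_pos hη' hE0)
    have h4 : η' / E * E = η' := div_mul_cancel₀ η' hE0.ne'
    rw [h4] at h3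
    exact h3
  exact lt_of_le_of_lt h2 hDE
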